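/- There exist no three-player impartial games X and Y such that X and Y are both Q-games and X + Y is an N-game or a P-game. -/

import Mathlib

/-- Three-player impartial games: well-founded game trees. -/
inductive G3 : Type 1 where
  | mk : (ι : Type) → (ι → G3) → G3

namespace G3

/-- The index type of options (moves) of a game. -/
def moves : G3 → Type
  | mk ι _ => ι

/-- The option of a game corresponding to a move. -/
def moveFn : (g : G3) → moves g → G3
  | mk _ f => f

/-- Disjunctive sum: move in exactly one component. -/
noncomputable def add : G3 → G3 → G3 :=
  G3.rec (fun ι f ihf =>
    G3.rec (fun κ g ihg =>
      mk (ι ⊕ κ) (fun x =>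
        match x with
        | Sum.inl i => ihf i (mk κ g)
        | Sum.inr j => ihg j)))

/-- The four outcome types of a three-player impartial game. -/
inductive PType : Type
  | N | O | P | Q
deriving DecidableEq

open Classical in
/-- The type of a game: `N` iff some option is a `P`-game; `O` iff it has at least
one option and all options are `N`-games; `P` iff all options are `O`-games;
`Q` otherwise. -/
noncomputable def typ : G3 → PType
  | mk ι f =>
    if ∃ i, typ (f i) = PType.P then PType.N
    else if Nonempty ι ∧ ∀ i, typ (f i) = PType.N then PType.O
    else if ∀ i, typ (f i) = PType.O then PType.P
    else PType.Q

/-- The Nim heap of size `n`: options are heaps of sizes `0, …, n-1`. -/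
def nim : ℕ → G3
  | n => mk (Fin n) (fun i => nim i)
termination_by n => n
decreasing_by exact i.isLt

/-- The sum of `n` Nim heaps of size 1. -/
noncomputable def ones : ℕ → G3
  | 0 => nim 0
  | n + 1 => add (ones n) (nim 1)


/-! ### Auxiliary development -/

section Aux

lemma add_mk (ι κ : Type) (f : ι → G3) (g : κ → G3) :
    add (mk ι f) (mk κ g) = mk (ι ⊕ κ) (fun x =>
      match x with
      | Sum.inl i => add (f i) (mk κ g)
      | Sum.inr j => add (mk ι f) (g j)) := rfl

open Classical in
lemma typ_mk {ι : Type} (f : ι → G3) :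
    typ (mk ι f) =
      if ∃ i, typ (f i) = PType.P then PType.N
      else if Nonempty ι ∧ ∀ i, typ (f i) = PType.N then PType.O
      else if ∀ i, typ (f i) = PType.O then PType.P
      else PType.Q := by
  rw [typ]

lemma typ_eq_N {ι : Type} (f : ι → G3) :
    typ (mk ι f) = PType.N ↔ ∃ i, typ (f i) = PType.P := by
  rw [typ_mk]; split_ifs with h1 h2 h3
  · exact iff_of_true rfl h1
  · exact iff_of_false (by simp) h1
  · exact iff_of_false (by simp) h1
  · exact iff_of_false (by simp) h1

lemma typ_eq_O {ι : Type} (f : ι → G3) :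
    typ (mk ι f) = PType.O ↔ Nonempty ι ∧ ∀ i, typ (f i) = PType.N := by
  rw [typ_mk]; split_ifs with h1 h2 h3
  · refine iff_of_false (by simp) (fun h => ?_)
    obtain ⟨i, hi⟩ := h1
    rw [h.2 i] at hi; simp at hi
  · exact iff_of_true rfl h2
  · exact iff_of_false (by simp) h2
  · exact iff_of_false (by simp) h2

lemma typ_eq_P {ι : Type} (f : ι → G3) :
    typ (mk ι f) = PType.P ↔ ∀ i, typ (f i) = PType.O := by
  rw [typ_mk]; split_ifs with h1 h2 h3
  · refine iff_of_false (by simp) (fun hO => ?_)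
    obtain ⟨i, hi⟩ := h1
    rw [hO i] at hi; simp at hi
  · refine iff_of_false (by simp) (fun hO => ?_)
    obtain ⟨⟨i⟩, hN⟩ := h2
    have := hN i
    rw [hO i] at this; simp at this
  · exact iff_of_true rfl h3
  · exact iff_of_false (by simp) h3

lemma typ_eq_Q {ι : Type} (f : ι → G3) :
    typ (mk ι f) = PType.Q ↔
      (¬ ∃ i, typ (f i) = PType.P) ∧ ¬ (Nonempty ι ∧ ∀ i, typ (f i) = PType.N) ∧
        ¬ ∀ i, typ (f i) = PType.O := by
  rw [typ_mk]; split_ifs with h1 h2 h3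
  · exact iff_of_false (by simp) (fun h => h.1 h1)
  · exact iff_of_false (by simp) (fun h => h.2.1 h2)
  · exact iff_of_false (by simp) (fun h => h.2.2 h3)
  · exact iff_of_true rfl ⟨h1, h2, h3⟩

lemma typ_congr {ι κ : Type} (f : ι → G3) (g : κ → G3) (e : ι ≃ κ)
    (h : ∀ i, typ (f i) = typ (g (e i))) : typ (mk ι f) = typ (mk κ g) := by
  have h1 : (∃ i, typ (f i) = PType.P) ↔ (∃ j, typ (g j) = PType.P) :=
    ⟨fun ⟨i, hi⟩ => ⟨e i, (h i).symm.trans hi⟩,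
     fun ⟨j, hj⟩ => ⟨e.symm j, (h _).trans (by rw [e.apply_symm_apply]; exact hj)⟩⟩
  have h2 : (∀ i, typ (f i) = PType.N) ↔ (∀ j, typ (g j) = PType.N) :=
    ⟨fun hf j => by rw [← e.apply_symm_apply j, ← h]; exact hf _,
     fun hg i => (h i).trans (hg _)⟩
  have h3 : (∀ i, typ (f i) = PType.O) ↔ (∀ j, typ (g j) = PType.O) :=
    ⟨fun hf j => by rw [← e.apply_symm_apply j, ← h]; exact hf _,
     fun hg i => (h i).trans (hg _)⟩
  have h4 : Nonempty ι ↔ Nonempty κ := e.nonempty_congr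
  rw [typ_mk, typ_mk]
  split_ifs <;> first | rfl | (exfalso; tauto)

lemma typ_add_empty {κ : Type} (g : κ → G3) (hκ : IsEmpty κ) :
    ∀ A, typ (add A (mk κ g)) = typ A := by
  intro A
  induction A with
  | mk ι f ih =>
    rw [add_mk]
    haveI := hκ
    exact typ_congr _ f (Equiv.sumEmpty ι κ)
      (fun x => by cases x with
        | inl i => simpa using ih i
        | inr j => exact hκ.elim j)

lemma typ_add_comm : ∀ A B : G3, typ (add A B) = typ (add B A) := by
  intro A
  induction A with
  | mk ι f ihA =>
    intro B
    induction B with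
    | mk κ g ihB =>
      rw [add_mk, add_mk]
      exact typ_congr _ _ (Equiv.sumComm ι κ)
        (fun x => by cases x with
          | inl i => simpa using ihA i (mk κ g)
          | inr j => simpa using ihB j)

/-- If `A + B` is an O-game then every option `A + B'` is an N-game. -/
lemma typ_O_option_right (A : G3) {κ : Type} (g : κ → G3)
    (h : typ (add A (mk κ g)) = PType.O) (j : κ) :
    typ (add A (g j)) = PType.N := by
  cases A with
  | mk ι f =>
    rw [add_mk] at h
    exact ((typ_eq_O _).mp h).2 (Sum.inr j)

/-- The option relation. -/
def IsOption (x y : G3) : Prop := ∃ i, moveFn y i = x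

theorem isOption_wf : WellFounded IsOption := by
  constructor
  intro a
  induction a with
  | mk ι f ih =>
    exact Acc.intro _ (fun b hb => by obtain ⟨i, hi⟩ := hb; exact hi ▸ ih i)

/-- Well-founded relation on pairs used for the main simultaneous induction. -/
def Rel : G3 × G3 → G3 × G3 → Prop :=
  Relation.TransGen (Prod.GameAdd IsOption IsOption)

theorem rel_wf : WellFounded Rel :=
  (isOption_wf.prod_gameAdd isOption_wf).transGen

lemma gameAdd_swap {p q : G3 × G3} (h : Prod.GameAdd IsOption IsOption p q) :
    Prod.GameAdd IsOption IsOption p.swap q.swap := by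
  cases h with
  | fst h => exact .snd h
  | snd h => exact .fst h

lemma rel_swap {p q : G3 × G3} (h : Rel p q) : Rel p.swap q.swap :=
  Relation.TransGen.lift Prod.swap (fun _ _ h => gameAdd_swap h) _ _ h

/-- The conjunction of facts proved by simultaneous induction. -/
def Good (A B : G3) : Prop :=
  (typ A = PType.Q → typ (add A B) ≠ PType.P) ∧
  (typ (add A B) = PType.N → typ B = PType.Q → typ A = PType.N ∨ typ A = PType.O) ∧
  (typ (add A B) = PType.O → typ A = PType.N → typ B = PType.N) ∧
  (typ (add A B) = PType.O → typ A = PType.P → typ B = PType.O) ∧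
  (typ A = PType.P → typ (add A B) = PType.P → typ B = PType.P) ∧
  (typ A = PType.P → typ (add A B) = PType.N → typ B = PType.N) ∧
  (typ A = PType.O → typ (add A B) = PType.P → typ B = PType.N)

lemma good_of (A B : G3)
    (IH : ∀ A' B', Rel (A', B') (A, B) → Good A' B' ∧ Good B' A') : Good A B := by
  obtain ⟨ι, f⟩ := A
  obtain ⟨κ, g⟩ := B
  set A := mk ι f with hA_def
  set B := mk κ g with hB_def
  have IH1 : ∀ i, Good (f i) B ∧ Good B (f i) := fun i =>
    IH (f i) B (Relation.TransGen.single (Prod.GameAdd.fst (⟨i, rfl⟩ : IsOption (f i) A)))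
  have IH2 : ∀ j, Good A (g j) ∧ Good (g j) A := fun j =>
    IH A (g j) (Relation.TransGen.single (Prod.GameAdd.snd (⟨j, rfl⟩ : IsOption (g j) B)))
  have IH3 : ∀ i j, Good (f i) (g j) ∧ Good (g j) (f i) := fun i j =>
    IH (f i) (g j) (Relation.TransGen.tail
      (Relation.TransGen.single (Prod.GameAdd.snd (⟨j, rfl⟩ : IsOption (g j) B)))
      (Prod.GameAdd.fst (⟨i, rfl⟩ : IsOption (f i) A)))
  have hsum : add A B = mk (ι ⊕ κ) (fun x =>
      match x with
      | Sum.inl i => add (f i) B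
      | Sum.inr j => add A (g j)) := rfl
  -- c7 : tA = O, sum = P ⊢ tB = N
  have c7 : typ A = PType.O → typ (add A B) = PType.P → typ B = PType.N := by
    intro hA hP
    obtain ⟨⟨i⟩, hallN⟩ := (typ_eq_O f).mp hA
    have hO : typ (add (f i) B) = PType.O := by
      have := (typ_eq_P _).mp (hsum ▸ hP) (Sum.inl i)
      simpa using this
    exact (IH1 i).1.2.2.1 hO (hallN i)
  -- c5 : tA = P, sum = P ⊢ tB = P
  have c5 : typ A = PType.P → typ (add A B) = PType.P → typ B = PType.P := by
    intro hA hP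
    refine (typ_eq_P g).mpr (fun j => ?_)
    have hO : typ (add A (g j)) = PType.O := by
      have := (typ_eq_P _).mp (hsum ▸ hP) (Sum.inr j)
      simpa using this
    exact (IH2 j).1.2.2.2.1 hO hA
  -- c6 : tA = P, sum = N ⊢ tB = N
  have c6 : typ A = PType.P → typ (add A B) = PType.N → typ B = PType.N := by
    intro hA hN
    obtain ⟨x, hx⟩ := (typ_eq_N _).mp (hsum ▸ hN)
    cases x with
    | inl i =>
      have hPi : typ (add (f i) B) = PType.P := by simpa using hx
      have hfi : typ (f i) = PType.O := (typ_eq_P f).mp hA i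
      exact (IH1 i).1.2.2.2.2.2.2 hfi hPi
    | inr j =>
      have hPj : typ (add A (g j)) = PType.P := by simpa using hx
      have : typ (g j) = PType.P := (IH2 j).1.2.2.2.2.1 hA hPj
      exact (typ_eq_N g).mpr ⟨j, this⟩
  -- c3 : sum = O, tA = N ⊢ tB = N
  have c3 : typ (add A B) = PType.O → typ A = PType.N → typ B = PType.N := by
    intro hO hA
    obtain ⟨i, hi⟩ := (typ_eq_N f).mp hA
    have hNi : typ (add (f i) B) = PType.N := by
      have := ((typ_eq_O _).mp (hsum ▸ hO)).2 (Sum.inl i)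
      simpa using this
    exact (IH1 i).1.2.2.2.2.2.1 hi hNi
  -- c4 : sum = O, tA = P ⊢ tB = O
  have c4 : typ (add A B) = PType.O → typ A = PType.P → typ B = PType.O := by
    intro hO hA
    by_cases hκ : Nonempty κ
    · refine (typ_eq_O g).mpr ⟨hκ, fun j => ?_⟩
      have hNj : typ (add A (g j)) = PType.N := by
        have := ((typ_eq_O _).mp (hsum ▸ hO)).2 (Sum.inr j)
        simpa using this
      exact (IH2 j).1.2.2.2.2.2.1 hA hNj
    · exfalso
      have : typ (add A B) = typ A := typ_add_empty g (not_nonempty_iff.mp hκ) A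
      rw [hO, hA] at this
      simp at this
  -- c2 : sum = N, tB = Q ⊢ tA = N ∨ tA = O
  have c2 : typ (add A B) = PType.N → typ B = PType.Q →
      typ A = PType.N ∨ typ A = PType.O := by
    intro hN hB
    obtain ⟨x, hx⟩ := (typ_eq_N _).mp (hsum ▸ hN)
    cases x with
    | inl i =>
      exfalso
      have hPi : typ (add (f i) B) = PType.P := by simpa using hx
      exact (IH1 i).2.1 hB (by rw [typ_add_comm]; exact hPi)
    | inr j =>
      have hPj : typ (add A (g j)) = PType.P := by simpa using hx
      cases hA : typ A with
      | N => exact Or.inl rfl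
      | O => exact Or.inr rfl
      | P =>
        exfalso
        have : typ (g j) = PType.P := (IH2 j).1.2.2.2.2.1 hA hPj
        exact ((typ_eq_Q g).mp hB).1 ⟨j, this⟩
      | Q => exact absurd hPj ((IH2 j).1.1 hA)
  -- c1 : tA = Q ⊢ sum ≠ P
  have c1 : typ A = PType.Q → typ (add A B) ≠ PType.P := by
    intro hA hP
    obtain ⟨hnoP, _, hnotallO⟩ := (typ_eq_Q f).mp hA
    obtain ⟨i₂, hi₂⟩ := not_forall.mp hnotallO
    by_cases hκ : Nonempty κ
    swap
    · have : typ (add A B) = typ A := typ_add_empty g (not_nonempty_iff.mp hκ) A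
      rw [hP, hA] at this
      simp at this
    have hallO : ∀ x : ι ⊕ κ, typ ((fun x =>
        match x with
        | Sum.inl i => add (f i) B
        | Sum.inr j => add A (g j)) x) = PType.O := (typ_eq_P _).mp (hsum ▸ hP)
    -- every option of B has type O or Q
    have hBopts : ∀ j, typ (g j) = PType.O ∨ typ (g j) = PType.Q := by
      intro j
      have hOj : typ (add A (g j)) = PType.O := by simpa using hallO (Sum.inr j)
      have hOj' : typ (add (g j) A) = PType.O := by rw [typ_add_comm]; exact hOj
      cases hgj : typ (g j) with
      | N =>
        exfalso
        have : typ A = PType.N := (IH2 j).2.2.2.1 hOj' hgj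
        rw [hA] at this; simp at this
      | O => exact Or.inl rfl
      | P =>
        exfalso
        have : typ A = PType.O := (IH2 j).2.2.2.2.1 hOj' hgj
        rw [hA] at this; simp at this
      | Q => exact Or.inr rfl
    have hBnotN : typ B ≠ PType.N := by
      intro hBN
      obtain ⟨j, hj⟩ := (typ_eq_N g).mp hBN
      rcases hBopts j with h | h <;> simp [hj] at h
    have hO2 : typ (add (f i₂) B) = PType.O := by simpa using hallO (Sum.inl i₂)
    by_cases hall : ∀ j, typ (g j) = PType.O
    · -- tB = P, contradiction via mirrored c4 at (f i₂, B)
      have hBP : typ B = PType.P := (typ_eq_P g).mpr hall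
      have hO2' : typ (add B (f i₂)) = PType.O := by rw [typ_add_comm]; exact hO2
      exact hi₂ ((IH1 i₂).2.2.2.2.1 hO2' hBP)
    · obtain ⟨j₂, hj₂⟩ := not_forall.mp hall
      have hgj₂ : typ (g j₂) = PType.Q := (hBopts j₂).resolve_left hj₂
      -- typ (f i₂) = Q
      have hfi₂ : typ (f i₂) = PType.Q := by
        cases hfi : typ (f i₂) with
        | N =>
          have : typ B = PType.N := (IH1 i₂).1.2.2.1 hO2 hfi
          exact absurd this hBnotN
        | O => exact absurd hfi hi₂
        | P => exact absurd ⟨i₂, hfi⟩ hnoP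
        | Q => rfl
      have hN2 : typ (add (f i₂) (g j₂)) = PType.N := typ_O_option_right (f i₂) g hO2 j₂
      rcases (IH3 i₂ j₂).1.2.1 hN2 hgj₂ with h | h <;> rw [hfi₂] at h <;> simp at h
  exact ⟨c1, c2, c3, c4, c5, c6, c7⟩

theorem good_all : ∀ A B : G3, Good A B ∧ Good B A := by
  have key : ∀ p : G3 × G3, Good p.1 p.2 ∧ Good p.2 p.1 := by
    intro p
    induction p using rel_wf.fix with
    | _ p IHp =>
      obtain ⟨A, B⟩ := p
      refine ⟨good_of A B (fun A' B' h => IHp (A', B') h), good_of B A (fun A' B' h => ?_)⟩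
      have h' : Rel (B', A') (A, B) := rel_swap h
      exact ⟨(IHp (B', A') h').2, (IHp (B', A') h').1⟩
  exact fun A B => key (A, B)

end Aux

theorem no_Q_plus_Q_eq_N_or_P :
    ¬ ∃ X Y : G3, typ X = PType.Q ∧ typ Y = PType.Q ∧
      (typ (add X Y) = PType.N ∨ typ (add X Y) = PType.P) := by
  rintro ⟨X, Y, hX, hY, hN | hP⟩
  · rcases (good_all X Y).1.2.1 hN hY with h | h <;> rw [hX] at h <;> simp at h
  · exact (good_all X Y).1.1 hX hP

end G3
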